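/- Let q₁ > 0 and let H, E'(t) be as in the context, and let f = (f₁, f₂) ∈ H with f₁ and f₂ continuous on ℝ. Then e_f(t) = ⟨f, E'(t) f⟩ is differentiable at every t ∈ (-1/2, 0) ∪ (0, 1/2), with derivative e_f'(t) = (1 - 2t)/(2 |t| · |ln(2|t|)|) · ( |f₂(s_t)|² + |f₂(-s_t)|² ) for t ∈ (-1/2, 0), and e_f'(t) = (1 - 2t)/(2 t · |ln(2t)|) · ( |f₁(s_t)|² + |f₁(-s_t)|² ) for t ∈ (0, 1/2), where s_t = |ln(2|t|)|/q₁. -/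

import Mathlib

open MeasureTheory Set
open scoped ENNReal NNReal

noncomputable section

/-- `w₁(k) = (1 - e^{-q₁|k|})/(2|k|)`. -/
def w1 (q₁ k : ℝ) : ℝ := (1 - Real.exp (-(q₁ * |k|))) / (2 * |k|)

/-- `w₂(k) = (1 + e^{-q₁|k|})/(2|k|)`. -/
def w2 (q₁ k : ℝ) : ℝ := (1 + Real.exp (-(q₁ * |k|))) / (2 * |k|)

/-- The measure `μ₁` with density `w₁` w.r.t. Lebesgue measure. -/
def mu1 (q₁ : ℝ) : Measure ℝ := volume.withDensity fun k => ENNReal.ofReal (w1 q₁ k)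

/-- The measure `μ₂` with density `w₂` w.r.t. Lebesgue measure. -/
def mu2 (q₁ : ℝ) : Measure ℝ := volume.withDensity fun k => ENNReal.ofReal (w2 q₁ k)

/-- First multiplier of the NP operator of the touching-disks domain: `(1/2)e^{-q₁|k|}`. -/
def m1' (q₁ k : ℝ) : ℝ := (1/2) * Real.exp (-(q₁ * |k|))

/-- Second multiplier of the NP operator of the touching-disks domain: `-(1/2)e^{-q₁|k|}`. -/
def m2' (q₁ k : ℝ) : ℝ := -(1/2) * Real.exp (-(q₁ * |k|))

/-- `A₁'(t) = {k : (1/2)e^{-q₁|k|} ≤ t}`. -/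
def A1' (q₁ t : ℝ) : Set ℝ := {k | m1' q₁ k ≤ t}

/-- `A₂'(t) = {k : -(1/2)e^{-q₁|k|} ≤ t}`. -/
def A2' (q₁ t : ℝ) : Set ℝ := {k | m2' q₁ k ≤ t}

/-- `e_f(t) = ⟨f, E'(t) f⟩` for `f = (f₁, f₂) ∈ H = L²(μ₁) × L²(μ₂)`, where
`E'(t)(f₁,f₂) = (1_{A₁'(t)} f₁, 1_{A₂'(t)} f₂)`. -/
def eSpec' (q₁ : ℝ) (f₁ f₂ : ℝ → ℂ) (t : ℝ) : ℝ :=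
  (∫ k in A1' q₁ t, ‖f₁ k‖ ^ 2 ∂(mu1 q₁)) + (∫ k in A2' q₁ t, ‖f₂ k‖ ^ 2 ∂(mu2 q₁))

/-! ### Auxiliary lemmas -/

lemma measurable_w1 (q₁ : ℝ) : Measurable (w1 q₁) := by
  unfold w1; fun_prop

lemma measurable_w2 (q₁ : ℝ) : Measurable (w2 q₁) := by
  unfold w2; fun_prop

lemma w1_nonneg {q₁ : ℝ} (hq : 0 < q₁) (k : ℝ) : 0 ≤ w1 q₁ k := by
  unfold w1
  apply div_nonneg
  · have : Real.exp (-(q₁ * |k|)) ≤ 1 := by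
      rw [Real.exp_le_one_iff]
      have : 0 ≤ q₁ * |k| := by positivity
      linarith
    linarith
  · positivity

lemma w2_nonneg (q₁ : ℝ) (k : ℝ) : 0 ≤ w2 q₁ k := by
  unfold w2
  apply div_nonneg
  · positivity
  · positivity

lemma continuousAt_w1 (q₁ : ℝ) {k : ℝ} (hk : k ≠ 0) : ContinuousAt (w1 q₁) k := by
  unfold w1
  apply ContinuousAt.div
  · fun_prop
  · fun_prop
  · simp [abs_eq_zero, hk]

lemma continuousAt_w2 (q₁ : ℝ) {k : ℝ} (hk : k ≠ 0) : ContinuousAt (w2 q₁) k := by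
  unfold w2
  apply ContinuousAt.div
  · fun_prop
  · fun_prop
  · simp [abs_eq_zero, hk]

lemma key_integrable (w : ℝ → ℝ) (hw : Measurable w) (hw0 : ∀ k, 0 ≤ w k) (f : ℝ → ℂ)
    (hf : MemLp f 2 (volume.withDensity fun k => ENNReal.ofReal (w k))) :
    Integrable (fun k => ‖f k‖ ^ 2 * w k) volume := by
  have h := hf.integrable_norm_rpow (by norm_num) (by norm_num)
  rw [integrable_withDensity_iff (hw.ennreal_ofReal)
      (ae_of_all _ fun k => ENNReal.ofReal_lt_top)] at h
  have : (fun k => ‖f k‖ ^ ((2:ℝ≥0∞).toReal) * (ENNReal.ofReal (w k)).toReal)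
      = fun k => ‖f k‖ ^ 2 * w k := by
    funext k
    rw [ENNReal.toReal_ofReal (hw0 k)]
    norm_num
  rwa [this] at h

lemma key_setIntegral (w : ℝ → ℝ) (hw : Measurable w) (hw0 : ∀ k, 0 ≤ w k) (f : ℝ → ℂ)
    {A : Set ℝ} (hA : MeasurableSet A) :
    ∫ k in A, ‖f k‖ ^ 2 ∂(volume.withDensity fun k => ENNReal.ofReal (w k))
      = ∫ k in A, ‖f k‖ ^ 2 * w k := by
  have h1 : (fun k => ENNReal.ofReal (w k)) = fun k => ((w k).toNNReal : ℝ≥0∞) := rfl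
  rw [h1, setIntegral_withDensity_eq_setIntegral_smul hw.real_toNNReal _ hA]
  refine setIntegral_congr_fun hA fun k _ => ?_
  simp [NNReal.smul_def, Real.coe_toNNReal _ (hw0 k), mul_comm]

lemma hasDerivAt_Ioo_integral (F : ℝ → ℝ) (hmeas : Measurable F) (hF : Integrable F volume)
    {s₀ : ℝ} (hs₀ : 0 < s₀) (hc1 : ContinuousAt F s₀) (hc2 : ContinuousAt F (-s₀)) :
    HasDerivAt (fun s => ∫ k in Ioo (-s) s, F k) (F s₀ + F (-s₀)) s₀ := by
  have hint : ∀ a b : ℝ, IntervalIntegrable F volume a b := fun a b => hF.intervalIntegrable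
  have hψ : ∀ u : ℝ, ContinuousAt F u →
      HasDerivAt (fun u => ∫ x in (0:ℝ)..u, F x) (F u) u := fun u hu =>
    intervalIntegral.integral_hasDerivAt_right (hint 0 u)
      hmeas.stronglyMeasurable.stronglyMeasurableAtFilter hu
  have h1 := hψ s₀ hc1
  have h2 := (hψ (-s₀) hc2).comp s₀ (hasDerivAt_neg s₀)
  have h3 := h1.sub h2
  have h4 : HasDerivAt (fun s => (∫ x in (0:ℝ)..s, F x) - ∫ x in (0:ℝ)..(-s), F x)
      (F s₀ + F (-s₀)) s₀ := by
    exact h3.congr_deriv (by ring)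
  refine h4.congr_of_eventuallyEq ?_
  filter_upwards [eventually_gt_nhds hs₀] with s hs
  have hadj := intervalIntegral.integral_add_adjacent_intervals (hint (-s) 0) (hint 0 s)
  have hsymm : (∫ x in (-s)..(0:ℝ), F x) = -∫ x in (0:ℝ)..(-s), F x :=
    intervalIntegral.integral_symm 0 (-s)
  have hIoc : (∫ x in (-s)..s, F x) = ∫ k in Ioo (-s) s, F k := by
    rw [intervalIntegral.integral_of_le (by linarith), integral_Ioc_eq_integral_Ioo]
  linarith [hadj, hsymm, hIoc]

lemma A1'_neg {q₁ t : ℝ} (ht : t < 0) : A1' q₁ t = ∅ := by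
  ext k
  simp only [A1', m1', mem_setOf_eq, mem_empty_iff_false, iff_false, not_le]
  nlinarith [Real.exp_pos (-(q₁ * |k|))]

lemma A2'_pos {q₁ t : ℝ} (ht : 0 < t) : A2' q₁ t = univ := by
  ext k
  simp only [A2', m2', mem_setOf_eq, mem_univ, iff_true]
  nlinarith [Real.exp_pos (-(q₁ * |k|))]

lemma A2'_neg {q₁ t : ℝ} (hq : 0 < q₁) (ht0 : t < 0) :
    A2' q₁ t = Icc (-(-Real.log (-(2*t))/q₁)) (-Real.log (-(2*t))/q₁) := by
  ext k
  simp only [A2', m2', mem_setOf_eq, mem_Icc]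
  rw [← abs_le]
  have h1 : (0:ℝ) < -(2*t) := by linarith
  constructor
  · intro h
    have h2 : -(2*t) ≤ Real.exp (-(q₁ * |k|)) := by nlinarith
    have h3 := (Real.log_le_iff_le_exp h1).2 h2
    rw [le_div_iff₀ hq]
    nlinarith
  · intro h
    rw [le_div_iff₀ hq] at h
    have h3 : Real.log (-(2*t)) ≤ -(q₁ * |k|) := by nlinarith
    have h2 := (Real.log_le_iff_le_exp h1).1 h3
    nlinarith

lemma A1'_pos {q₁ t : ℝ} (hq : 0 < q₁) (ht0 : 0 < t) :
    A1' q₁ t = (Ioo (-(-Real.log (2*t)/q₁)) (-Real.log (2*t)/q₁))ᶜ := by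
  ext k
  simp only [A1', m1', mem_setOf_eq, mem_compl_iff, mem_Ioo]
  rw [← abs_lt, not_lt]
  have h1 : (0:ℝ) < 2*t := by linarith
  constructor
  · intro h
    have h2 : Real.exp (-(q₁ * |k|)) ≤ 2*t := by nlinarith
    have h3 := (Real.le_log_iff_exp_le h1).2 h2
    rw [div_le_iff₀ hq]
    nlinarith
  · intro h
    rw [div_le_iff₀ hq] at h
    have h3 : -(q₁ * |k|) ≤ Real.log (2*t) := by nlinarith
    have h2 := (Real.le_log_iff_exp_le h1).1 h3
    nlinarith

lemma alg_neg (t L q a b c : ℝ) (ht : t ≠ 0) (hL : L ≠ 0) (hq : q ≠ 0) :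
    c / (-(2*t) * -L) * (a + b) = (a * (c / (2 * (-L/q))) + b * (c / (2 * (-L/q)))) * (-t⁻¹/q) := by
  field_simp
  ring

lemma alg_pos (t L q a b c : ℝ) (ht : t ≠ 0) (hL : L ≠ 0) (hq : q ≠ 0) :
    c / (2 * t * -L) * (a + b) = -((a * (c / (2 * (-L/q))) + b * (c / (2 * (-L/q)))) * (-t⁻¹/q)) := by
  field_simp
  ring

/-- For `f = (f₁,f₂) ∈ H` with `f₁, f₂` continuous,
`e_f(t) = ⟨f, E'(t) f⟩` is differentiable on `(-1/2,0) ∪ (0,1/2)`, with the explicit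
derivative given by the spectral density of the touching-disks domain, where
`s_t = |ln(2|t|)|/q₁`. -/
theorem neumannPoincare_touchingDisks_spectral_density
    (q₁ : ℝ) (hq₁ : 0 < q₁) (f₁ f₂ : ℝ → ℂ)
    (hf₁ : MemLp f₁ 2 (mu1 q₁)) (hf₂ : MemLp f₂ 2 (mu2 q₁))
    (hc₁ : Continuous f₁) (hc₂ : Continuous f₂) :
    (∀ t ∈ Ioo (-(1/2) : ℝ) 0,
      HasDerivAt (eSpec' q₁ f₁ f₂)
        ((1 - 2*t) / (2 * |t| * |Real.log (2*|t|)|) *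
          (‖f₂ (|Real.log (2*|t|)| / q₁)‖ ^ 2 + ‖f₂ (-(|Real.log (2*|t|)| / q₁))‖ ^ 2)) t) ∧
    (∀ t ∈ Ioo (0 : ℝ) (1/2),
      HasDerivAt (eSpec' q₁ f₁ f₂)
        ((1 - 2*t) / (2 * t * |Real.log (2*t)|) *
          (‖f₁ (|Real.log (2*|t|)| / q₁)‖ ^ 2 + ‖f₁ (-(|Real.log (2*|t|)| / q₁))‖ ^ 2)) t) := by
  -- the densities of the two integrands w.r.t. Lebesgue measure
  set F₁ : ℝ → ℝ := fun k => ‖f₁ k‖ ^ 2 * w1 q₁ k with hF₁def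
  set F₂ : ℝ → ℝ := fun k => ‖f₂ k‖ ^ 2 * w2 q₁ k with hF₂def
  have hF₁meas : Measurable F₁ := ((hc₁.norm.pow 2).measurable).mul (measurable_w1 q₁)
  have hF₂meas : Measurable F₂ := ((hc₂.norm.pow 2).measurable).mul (measurable_w2 q₁)
  have hF₁int : Integrable F₁ volume :=
    key_integrable _ (measurable_w1 q₁) (w1_nonneg hq₁) f₁ hf₁
  have hF₂int : Integrable F₂ volume :=
    key_integrable _ (measurable_w2 q₁) (w2_nonneg q₁) f₂ hf₂
  have hF₁cont : ∀ k : ℝ, k ≠ 0 → ContinuousAt F₁ k := fun k hk =>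
    ((hc₁.norm.pow 2).continuousAt).mul (continuousAt_w1 q₁ hk)
  have hF₂cont : ∀ k : ℝ, k ≠ 0 → ContinuousAt F₂ k := fun k hk =>
    ((hc₂.norm.pow 2).continuousAt).mul (continuousAt_w2 q₁ hk)
  constructor
  · -- negative case
    rintro t₀ ht
    obtain ⟨ht1, ht2⟩ := ht
    set s₀ : ℝ := -Real.log (-(2*t₀)) / q₁ with hs₀def
    have h2t : (0:ℝ) < -(2*t₀) := by linarith
    have h2t1 : -(2*t₀) < 1 := by linarith
    have hlogneg : Real.log (-(2*t₀)) < 0 := Real.log_neg h2t h2t1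
    have hs₀pos : 0 < s₀ := by
      apply div_pos (by linarith) hq₁
    -- derivative of s(t)
    have hσ : HasDerivAt (fun t => -Real.log (-(2*t)) / q₁) (-(t₀⁻¹) / q₁) t₀ := by
      have hinner : HasDerivAt (fun t : ℝ => -(2*t)) (-2) t₀ := by
        exact ((hasDerivAt_id t₀).const_mul 2).neg.congr_deriv (by norm_num)
      have hlog := (Real.hasDerivAt_log (by linarith : -(2*t₀) ≠ 0)).comp t₀ hinner
      have := (hlog.neg).div_const q₁
      refine this.congr_deriv (Eq.symm ?_)
      rw [inv_neg, mul_inv]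
      ring
    -- derivative of the moving integral
    have hG : HasDerivAt (fun s => ∫ k in Ioo (-s) s, F₂ k) (F₂ s₀ + F₂ (-s₀)) s₀ :=
      hasDerivAt_Ioo_integral F₂ hF₂meas hF₂int hs₀pos
        (hF₂cont s₀ (ne_of_gt hs₀pos)) (hF₂cont (-s₀) (by linarith))
    have hcomp := hG.comp t₀ hσ
    -- eSpec' agrees with the composition near t₀
    have hev : eSpec' q₁ f₁ f₂ =ᶠ[nhds t₀]
        (fun s => ∫ k in Ioo (-s) s, F₂ k) ∘ (fun t => -Real.log (-(2*t)) / q₁) := by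
      filter_upwards [isOpen_Ioo.mem_nhds (⟨ht1, ht2⟩ : t₀ ∈ Ioo (-(1/2):ℝ) 0)] with t ht
      obtain ⟨ht1', ht2'⟩ := ht
      show eSpec' q₁ f₁ f₂ t = ∫ k in Ioo (-(-Real.log (-(2*t)) / q₁)) (-Real.log (-(2*t)) / q₁), F₂ k
      rw [eSpec', A1'_neg ht2', A2'_neg hq₁ ht2']
      simp only [Measure.restrict_empty, integral_zero_measure, zero_add]
      rw [show (mu2 q₁) = volume.withDensity fun k => ENNReal.ofReal (w2 q₁ k) from rfl]
      rw [key_setIntegral _ (measurable_w2 q₁) (w2_nonneg q₁) f₂ measurableSet_Icc]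
      rw [integral_Icc_eq_integral_Ioo]
    have hmain := hcomp.congr_of_eventuallyEq hev
    -- identify the derivative value
    refine hmain.congr_deriv (Eq.symm ?_)
    have habs : |t₀| = -t₀ := abs_of_neg ht2
    have habs2 : (2 * |t₀| : ℝ) = -(2*t₀) := by rw [habs]; ring
    have habslog : |Real.log (-(2*t₀))| = -Real.log (-(2*t₀)) := abs_of_neg hlogneg
    rw [habs2, habslog]
    have harg : -Real.log (-(2*t₀)) / q₁ = s₀ := rfl
    rw [harg]
    have hexp : Real.exp (-(q₁ * s₀)) = -(2*t₀) := by
      rw [show -(q₁ * s₀) = Real.log (-(2*t₀)) by rw [hs₀def]; field_simp]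
      exact Real.exp_log h2t
    have hw2s : w2 q₁ s₀ = (1 - 2*t₀) / (2 * s₀) := by
      rw [w2, abs_of_pos hs₀pos, hexp]; ring_nf
    have hw2s' : w2 q₁ (-s₀) = (1 - 2*t₀) / (2 * s₀) := by
      rw [w2, abs_neg, abs_of_pos hs₀pos, hexp]; ring_nf
    rw [hF₂def]
    simp only []
    rw [hw2s, hw2s']
    have hL : Real.log (-(2*t₀)) ≠ 0 := ne_of_lt hlogneg
    have ht₀ : t₀ ≠ 0 := ne_of_lt ht2
    rw [hs₀def]
    exact alg_neg _ _ _ _ _ _ ht₀ hL hq₁.ne'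
  · -- positive case
    rintro t₀ ht
    obtain ⟨ht1, ht2⟩ := ht
    set s₀ : ℝ := -Real.log (2*t₀) / q₁ with hs₀def
    have h2t : (0:ℝ) < 2*t₀ := by linarith
    have h2t1 : 2*t₀ < 1 := by linarith
    have hlogneg : Real.log (2*t₀) < 0 := Real.log_neg h2t h2t1
    have hs₀pos : 0 < s₀ := by
      apply div_pos (by linarith) hq₁
    have hσ : HasDerivAt (fun t => -Real.log (2*t) / q₁) (-(t₀⁻¹) / q₁) t₀ := by
      have hinner : HasDerivAt (fun t : ℝ => 2*t) (2) t₀ := by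
        simpa using (hasDerivAt_id t₀).const_mul 2
      have hlog := (Real.hasDerivAt_log (by linarith : (2*t₀) ≠ 0)).comp t₀ hinner
      have := (hlog.neg).div_const q₁
      refine this.congr_deriv (Eq.symm ?_)
      rw [mul_inv]
      ring
    have hG : HasDerivAt (fun s => ∫ k in Ioo (-s) s, F₁ k) (F₁ s₀ + F₁ (-s₀)) s₀ :=
      hasDerivAt_Ioo_integral F₁ hF₁meas hF₁int hs₀pos
        (hF₁cont s₀ (ne_of_gt hs₀pos)) (hF₁cont (-s₀) (by linarith))
    have hcomp := hG.comp t₀ hσ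
    set C₂ : ℝ := ∫ k, ‖f₂ k‖ ^ 2 ∂(mu2 q₁) with hC₂def
    set I₁ : ℝ := ∫ k, F₁ k with hI₁def
    have hmain' : HasDerivAt (fun t => (I₁ - (∫ k in Ioo (-(-Real.log (2*t) / q₁)) (-Real.log (2*t) / q₁), F₁ k)) + C₂)
        (-((F₁ s₀ + F₁ (-s₀)) * (-(t₀⁻¹) / q₁))) t₀ := (hcomp.const_sub I₁).add_const C₂
    have hev : eSpec' q₁ f₁ f₂ =ᶠ[nhds t₀]
        (fun t => (I₁ - (∫ k in Ioo (-(-Real.log (2*t) / q₁)) (-Real.log (2*t) / q₁), F₁ k)) + C₂) := by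
      filter_upwards [isOpen_Ioo.mem_nhds (⟨ht1, ht2⟩ : t₀ ∈ Ioo (0:ℝ) (1/2))] with t ht
      obtain ⟨ht1', ht2'⟩ := ht
      rw [eSpec', A1'_pos hq₁ ht1', A2'_pos ht1']
      rw [show (mu1 q₁) = volume.withDensity fun k => ENNReal.ofReal (w1 q₁ k) from rfl]
      rw [key_setIntegral _ (measurable_w1 q₁) (w1_nonneg hq₁) f₁ measurableSet_Ioo.compl]
      have hsplit := integral_add_compl (measurableSet_Ioo
        (a := -(-Real.log (2*t) / q₁)) (b := -Real.log (2*t) / q₁)) hF₁int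
      rw [Measure.restrict_univ, ← hC₂def]
      have : (∫ k in (Ioo (-(-Real.log (2*t) / q₁)) (-Real.log (2*t) / q₁))ᶜ, F₁ k)
          = I₁ - ∫ k in Ioo (-(-Real.log (2*t) / q₁)) (-Real.log (2*t) / q₁), F₁ k := by
        rw [hI₁def]; linarith [hsplit]
      show (∫ k in (Ioo (-(-Real.log (2*t) / q₁)) (-Real.log (2*t) / q₁))ᶜ, F₁ k) + C₂ = _
      rw [this]
    have hmain := hmain'.congr_of_eventuallyEq hev
    refine hmain.congr_deriv (Eq.symm ?_)
    have habs : |t₀| = t₀ := abs_of_pos ht1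
    have habslog : |Real.log (2*t₀)| = -Real.log (2*t₀) := abs_of_neg hlogneg
    rw [habs, habslog]
    have harg : -Real.log (2*t₀) / q₁ = s₀ := rfl
    rw [harg]
    have hexp : Real.exp (-(q₁ * s₀)) = 2*t₀ := by
      rw [show -(q₁ * s₀) = Real.log (2*t₀) by rw [hs₀def]; field_simp]
      exact Real.exp_log h2t
    have hw1s : w1 q₁ s₀ = (1 - 2*t₀) / (2 * s₀) := by
      rw [w1, abs_of_pos hs₀pos, hexp]
    have hw1s' : w1 q₁ (-s₀) = (1 - 2*t₀) / (2 * s₀) := by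
      rw [w1, abs_neg, abs_of_pos hs₀pos, hexp]
    rw [hF₁def]
    simp only []
    rw [hw1s, hw1s']
    have hL : Real.log (2*t₀) ≠ 0 := ne_of_lt hlogneg
    have ht₀ : t₀ ≠ 0 := ne_of_gt ht1
    rw [hs₀def]
    exact alg_pos _ _ _ _ _ _ ht₀ hL hq₁.ne'
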